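/- Fix real numbers T > 0, M > 0, λ > 0 and a0 > 0, and fix a parameter a ∈ [0,M]. Then there exists a constant C > 0 such that for all s ≥ 1 and all t ∈ (0,T): |d/dt ( e^{−2 s α_a(t) − 2 a0 s α*(t)} · ξ_a(t)³ )| ≤ C · T · s · e^{−2 s α_a(t) − 2 a0 s α*(t)} · ξ_a(t)^{21/5}. -/

import Mathlib

/-- The Carleman weight `α_a(t) = (e^{12λM} − e^{λ(10M+a)})/(t(T−t))⁵`, where
`a ∈ [0,M]` plays the role of the value `η(x)`. -/
noncomputable def alphaA (T M lam a t : ℝ) : ℝ :=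
  (Real.exp (12 * lam * M) - Real.exp (lam * (10 * M + a))) / (t * (T - t)) ^ 5

/-- The Carleman weight `ξ_a(t) = e^{λ(10M+a)}/(t(T−t))⁵`. -/
noncomputable def xiA (T M lam a t : ℝ) : ℝ :=
  Real.exp (lam * (10 * M + a)) / (t * (T - t)) ^ 5

/-- The Carleman weight `α*(t) = α_0(t) = (e^{12λM} − e^{10λM})/(t(T−t))⁵`. -/
noncomputable def alphaStar (T M lam t : ℝ) : ℝ :=
  (Real.exp (12 * lam * M) - Real.exp (10 * lam * M)) / (t * (T - t)) ^ 5

private lemma aux_quarter (T t : ℝ) : t * (T - t) ≤ T ^ 2 / 4 := by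
  nlinarith [sq_nonneg (2 * t - T)]

set_option maxHeartbeats 1000000 in
/-- Time-derivative bound
`|∂_t (e^{−2sα − 2a0 sα*} ξ³)| ≤ C T s e^{−2sα − 2a0 sα*} ξ^{21/5}` used to
estimate the term `I₁` in the proof of Proposition 3.1 of the paper. -/
theorem weight_time_derivative_bound (T M lam a0 a : ℝ)
    (hT : 0 < T) (hM : 0 < M) (hlam : 0 < lam) (ha0 : 0 < a0)
    (ha : a ∈ Set.Icc (0 : ℝ) M) :
    ∃ C > (0 : ℝ), ∀ s ≥ (1 : ℝ), ∀ t ∈ Set.Ioo (0 : ℝ) T,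
      |deriv (fun u =>
          Real.exp (-2 * s * alphaA T M lam a u - 2 * a0 * s * alphaStar T M lam u)
            * (xiA T M lam a u) ^ 3) t| ≤
        C * T * s *
          Real.exp (-2 * s * alphaA T M lam a t - 2 * a0 * s * alphaStar T M lam t)
            * (xiA T M lam a t) ^ ((21 : ℝ) / 5) := by
  obtain ⟨ha1, ha2⟩ := ha
  set b1 : ℝ := Real.exp (12 * lam * M) - Real.exp (lam * (10 * M + a)) with hb1def
  set b2 : ℝ := Real.exp (12 * lam * M) - Real.exp (10 * lam * M) with hb2def
  set c : ℝ := Real.exp (lam * (10 * M + a)) with hcdef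
  have hc : 0 < c := Real.exp_pos _
  have hb1 : 0 < b1 := sub_pos.mpr (Real.exp_lt_exp.mpr (by nlinarith))
  have hb2 : 0 < b2 := sub_pos.mpr (Real.exp_lt_exp.mpr (by nlinarith))
  have hcr : 0 < c ^ ((21:ℝ)/5) := Real.rpow_pos_of_pos hc _
  refine ⟨(10*(b1 + a0*b2) + 15*(T^2/4)^5 + 1) * c^3 / c^((21:ℝ)/5), by positivity, ?_⟩
  intro s hs t ht
  obtain ⟨ht1, ht2⟩ := ht
  have hh : 0 < t * (T - t) := mul_pos ht1 (sub_pos.mpr ht2)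
  have hh5 : (0:ℝ) < (t * (T - t))^5 := by positivity
  set K : ℝ := -2*s*b1 - 2*a0*s*b2 with hKdef
  -- rewrite the function
  have hfun : (fun u =>
          Real.exp (-2 * s * alphaA T M lam a u - 2 * a0 * s * alphaStar T M lam u)
            * (xiA T M lam a u) ^ 3)
      = (fun u : ℝ => Real.exp (K / (u*(T-u))^5) * (c^3 / (u*(T-u))^15)) := by
    funext u
    simp only [alphaA, alphaStar, xiA, hKdef, hb1def, hb2def, hcdef]
    congr 1
    · congr 1; ring
    · rw [div_pow, ← pow_mul]
      try norm_num
  -- derivative of u*(T-u)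
  have hD0 : HasDerivAt (fun u : ℝ => u*(T-u)) (T - 2*t) t := by
    have := (hasDerivAt_id t).fun_mul ((hasDerivAt_const t T).fun_sub (hasDerivAt_id t))
    refine this.congr_deriv ?_; simp [id_eq]; ring
  have hD5 : HasDerivAt (fun u : ℝ => (u*(T-u))^5) (5*(t*(T-t))^4*(T-2*t)) t := by
    have := hD0.fun_pow 5
    refine this.congr_deriv ?_; push_cast; ring
  have hD15 : HasDerivAt (fun u : ℝ => (u*(T-u))^15) (15*(t*(T-t))^14*(T-2*t)) t := by
    have := hD0.fun_pow 15
    refine this.congr_deriv ?_; push_cast; ring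
  have hq : HasDerivAt (fun u : ℝ => K / (u*(T-u))^5)
      ((0 * (t*(T-t))^5 - K * (5*(t*(T-t))^4*(T-2*t))) / ((t*(T-t))^5)^2) t :=
    (hasDerivAt_const t K).div hD5 (ne_of_gt hh5)
  have hX : HasDerivAt (fun u : ℝ => c^3 / (u*(T-u))^15)
      ((0 * (t*(T-t))^15 - c^3 * (15*(t*(T-t))^14*(T-2*t))) / ((t*(T-t))^15)^2) t :=
    (hasDerivAt_const t (c^3)).div hD15 (by positivity)
  have hE := hq.exp
  have hF := hE.fun_mul hX
  rw [hfun, hF.deriv]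
  set E : ℝ := Real.exp (K / (t*(T-t))^5) with hEdef
  have hEpos : 0 < E := Real.exp_pos _
  set h : ℝ := t * (T - t) with hhdef
  -- simplify derivative expression
  set P : ℝ := 5*(2*s*b1 + 2*a0*s*b2)*c^3/h^21 with hPdef
  set Q : ℝ := 15*c^3/h^16 with hQdef
  have hs0 : (0:ℝ) < s := lt_of_lt_of_le one_pos hs
  have hPpos : 0 ≤ P := by
    have h0 : 0 ≤ 2*s*b1 + 2*a0*s*b2 := by
      nlinarith [mul_pos hs0 hb1, mul_pos (mul_pos ha0 hs0) hb2]
    rw [hPdef]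
    positivity
  have hQpos : 0 ≤ Q := by rw [hQdef]; positivity
  have hEq : E * ((0 * (t*(T-t))^5 - K * (5*(t*(T-t))^4*(T-2*t))) / ((t*(T-t))^5)^2)
        * (c^3 / (t*(T-t))^15)
      + E * ((0 * (t*(T-t))^15 - c^3 * (15*(t*(T-t))^14*(T-2*t))) / ((t*(T-t))^15)^2)
      = E * (T - 2*t) * (P - Q) := by
    rw [hPdef, hQdef, hKdef, ← hhdef]
    field_simp
    ring
  rw [hEq]
  have habs1 : |T - 2*t| ≤ T := by rw [abs_le]; constructor <;> linarith
  have habs2 : |P - Q| ≤ P + Q := (abs_sub P Q).trans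
    (by rw [abs_of_nonneg hPpos, abs_of_nonneg hQpos])
  have step1 : |E * (T - 2*t) * (P - Q)| ≤ E * T * (P + Q) := by
    rw [abs_mul, abs_mul, abs_of_pos hEpos]
    gcongr
  refine step1.trans ?_
  -- now bound E*T*(P+Q) by the RHS
  have hxi : (xiA T M lam a t) ^ ((21:ℝ)/5) = c^((21:ℝ)/5) / h^21 := by
    rw [xiA, ← hcdef, ← hhdef, Real.div_rpow hc.le (by positivity)]
    congr 1
    rw [← Real.rpow_natCast h 5, ← Real.rpow_mul hh.le, ← Real.rpow_natCast h 21]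
    norm_num
  -- rewrite exp argument in goal
  have hexpArg : -2 * s * alphaA T M lam a t - 2 * a0 * s * alphaStar T M lam t
      = K / h^5 := by
    simp only [alphaA, alphaStar, hKdef, hb1def, hb2def, ← hhdef]; ring
  rw [hexpArg, ← hEdef, hxi]
  have hhle : h^5 ≤ (T^2/4)^5 := by
    exact pow_le_pow_left₀ hh.le (aux_quarter T t) 5
  have key : P + Q ≤ ((10*(b1 + a0*b2) + 15*(T^2/4)^5 + 1) * c^3 / c^((21:ℝ)/5)) * s
      * (c^((21:ℝ)/5) / h^21) := by
    have h21 : (0:ℝ) < h^21 := by positivity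
    have hQ' : Q = 15*c^3*h^5/h^21 := by
      rw [hQdef]; field_simp
    rw [hPdef, hQ', ← add_div, div_le_iff₀ h21]
    have hrw : ((10*(b1 + a0*b2) + 15*(T^2/4)^5 + 1) * c^3 / c^((21:ℝ)/5)) * s
        * (c^((21:ℝ)/5) / h^21) * h^21
        = (10*(b1 + a0*b2) + 15*(T^2/4)^5 + 1) * c^3 * s := by
      field_simp
    rw [hrw]
    have hb : 15*c^3*h^5 ≤ 15*c^3*(T^2/4)^5 :=
      mul_le_mul_of_nonneg_left hhle (by positivity)
    nlinarith [mul_nonneg (sub_nonneg.mpr hs) (by positivity : (0:ℝ) ≤ 15*c^3*(T^2/4)^5),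
      mul_pos hs0 (pow_pos hc 3)]
  calc E * T * (P + Q)
      ≤ E * T * (((10*(b1 + a0*b2) + 15*(T^2/4)^5 + 1) * c^3 / c^((21:ℝ)/5)) * s
        * (c^((21:ℝ)/5) / h^21)) := by gcongr
    _ = (10*(b1 + a0*b2) + 15*(T^2/4)^5 + 1) * c^3 / c^((21:ℝ)/5) * T * s * E
        * (c^((21:ℝ)/5) / h^21) := by ring
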